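/- Let V be a Jordan algebra over K and assume that for every x ∈ V, if L_x is a derivation of V then L_x = 0. Then the projection onto the first component, (A,B) ↦ A, restricts to a Lie algebra isomorphism from Inn(V,V) onto the K-span of the operators D_{x,y} (x,y ∈ V) in End_K(V). In particular, if (A,B) ∈ Inn(V,V) and A = 0, then B = 0. -/

import Mathlib

variable {K V : Type*} [Field K] [AddCommGroup V] [Module K V]

/-- The Jordan triple product `{x,y,z} = 2((xy)z + x(yz) - y(xz))`. -/
def triple (m : V →ₗ[K] V →ₗ[K] V) (x y z : V) : V :=
  2 • (m (m x y) z + m x (m y z) - m y (m x z))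

/-- The operator `D_{x,y} = 2 L_{xy} + 2[L_x, L_y]`, satisfying `D_{x,y} z = {x,y,z}`. -/
def Dop (m : V →ₗ[K] V →ₗ[K] V) (x y : V) : Module.End K V :=
  2 • (m (m x y) : Module.End K V) + 2 • ⁅(m x : Module.End K V), (m y : Module.End K V)⁆

/-- A derivation of the (Jordan) algebra `(V, m)`. -/
def IsDeriv (m : V →ₗ[K] V →ₗ[K] V) (D : Module.End K V) : Prop :=
  ∀ x y, D (m x y) = m (D x) y + m x (D y)

/-- A pair derivation `(D⁺, D⁻)` of the Jordan algebra `(V, m)`. -/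
def IsPairDer (m : V →ₗ[K] V →ₗ[K] V) (Dp Dm : Module.End K V) : Prop :=
  ∀ x y z,
    Dp (triple m x y z)
      = triple m (Dp x) y z + triple m x (Dm y) z + triple m x y (Dp z) ∧
    Dm (triple m x y z)
      = triple m (Dm x) y z + triple m x (Dp y) z + triple m x y (Dm z)

/-- If no nonzero `L_x` is a derivation, then projection onto the first
component is a Lie algebra isomorphism from `Inn(V,V)` onto `span{D_{x,y}}`; in
particular if `(A,B) ∈ Inn(V,V)` and `A = 0` then `B = 0`. -/
theorem stmt3
    (h2 : (2 : K) ≠ 0) (h3 : (3 : K) ≠ 0)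
    (m : V →ₗ[K] V →ₗ[K] V)
    (hcomm : ∀ x y : V, m x y = m y x)
    (hJordan : ∀ x y z : V,
      ⁅(m x : Module.End K V), m (m y z)⁆ + ⁅(m y : Module.End K V), m (m z x)⁆
        + ⁅(m z : Module.End K V), m (m x y)⁆ = 0)
    (hL : ∀ x : V, IsDeriv m (m x) → (m x : Module.End K V) = 0) :
    Set.BijOn (Prod.fst : Module.End K V × Module.End K V → Module.End K V)
      (Submodule.span K {p : Module.End K V × Module.End K V |
          ∃ x y, p = (Dop m x y, - Dop m y x)} : Set _)
      (Submodule.span K {A : Module.End K V | ∃ x y, A = Dop m x y} : Set _) ∧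
    (∀ p : Module.End K V × Module.End K V,
      p ∈ Submodule.span K {p : Module.End K V × Module.End K V |
          ∃ x y, p = (Dop m x y, - Dop m y x)} →
      p.1 = 0 → p.2 = 0) := by
  set S : Set (Module.End K V × Module.End K V) :=
    {p | ∃ x y, p = (Dop m x y, - Dop m y x)} with hS
  set T : Set (Module.End K V) := {A | ∃ x y, A = Dop m x y} with hT
  -- [L_a, L_b] is a derivation
  have hbr : ∀ a b : V, IsDeriv m ⁅(m a : Module.End K V), (m b : Module.End K V)⁆ := by
    intro a b c d
    have h1 := LinearMap.congr_fun (hJordan a c d) b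
    have h2 := LinearMap.congr_fun (hJordan b c d) a
    simp only [Ring.lie_def, LinearMap.add_apply, LinearMap.sub_apply, Module.End.mul_apply,
      LinearMap.zero_apply, map_sub] at h1 h2 ⊢
    rw [hcomm (m c d) b, hcomm d a, hcomm (m a d) b, hcomm (m a c) b,
      hcomm d (m b (m a c)), hcomm c b, hcomm d b] at h1
    rw [hcomm (m c d) a, hcomm b a, hcomm d b, hcomm (m b d) a,
      hcomm (m b d) (m c a), hcomm c a, hcomm (m b c) (m d a), hcomm d a,
      hcomm (m b c) a, hcomm d (m a (m b c))] at h2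
    linear_combination (norm := module) h1 - h2
  -- closure properties of derivations
  have hDadd : ∀ {D E : Module.End K V}, IsDeriv m D → IsDeriv m E → IsDeriv m (D + E) := by
    intro D E hD hE x y
    simp only [LinearMap.add_apply, hD x y, hE x y, map_add]
    abel
  have hDsmulK : ∀ (c : K) {D : Module.End K V}, IsDeriv m D → IsDeriv m (c • D) := by
    intro c D hD x y
    simp only [LinearMap.smul_apply, hD x y, map_smul, smul_add]
  have hDnsmul : ∀ (n : ℕ) {D : Module.End K V}, IsDeriv m D → IsDeriv m (n • D) := by
    intro n D hD x y
    simp only [LinearMap.smul_apply, hD x y, map_nsmul, smul_add]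
  have hD0 : IsDeriv m (0 : Module.End K V) := by
    intro x y; simp
  -- key invariant on the span
  have key : ∀ p ∈ Submodule.span K S,
      IsDeriv m (p.1 + p.2) ∧ ∃ z : V, p.1 - p.2 = (m z : Module.End K V) := by
    intro p hp
    induction hp using Submodule.span_induction with
    | mem q hq =>
      obtain ⟨x, y, rfl⟩ := hq
      constructor
      · have e : Dop m x y + - Dop m y x
            = (4 : ℕ) • ⁅(m x : Module.End K V), (m y : Module.End K V)⁆ := by
          have hmm := congrArg m (hcomm x y)
          rw [Dop, Dop, ← hmm, (@lie_skew (Module.End K V) LieRing.ofAssociativeRing (m x) (m y)).symm]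
          module
        exact e ▸ hDnsmul 4 (hbr x y)
      · refine ⟨(4 : ℕ) • m x y, ?_⟩
        have hmm := congrArg m (hcomm x y)
        rw [map_nsmul, sub_neg_eq_add, Dop, Dop, ← hmm,
          (@lie_skew (Module.End K V) LieRing.ofAssociativeRing (m x) (m y)).symm]
        module
    | zero => exact ⟨by simpa using hD0, 0, by simp⟩
    | add q r hq hr ihq ihr =>
      obtain ⟨hdq, zq, hzq⟩ := ihq
      obtain ⟨hdr, zr, hzr⟩ := ihr
      constructor
      · have e : (q + r).1 + (q + r).2 = (q.1 + q.2) + (r.1 + r.2) := by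
          simp [Prod.fst_add, Prod.snd_add]; abel
        exact e ▸ hDadd hdq hdr
      · refine ⟨zq + zr, ?_⟩
        simp only [Prod.fst_add, Prod.snd_add, map_add]
        rw [← hzq, ← hzr]; abel
    | smul c q hq ihq =>
      obtain ⟨hdq, zq, hzq⟩ := ihq
      constructor
      · have e : (c • q).1 + (c • q).2 = c • (q.1 + q.2) := by
          simp [Prod.smul_fst, Prod.smul_snd, smul_add]
        exact e ▸ hDsmulK c hdq
      · refine ⟨c • zq, ?_⟩
        simp only [Prod.smul_fst, Prod.smul_snd, map_smul]
        rw [← hzq, smul_sub]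
  -- second part
  have part2 : ∀ p : Module.End K V × Module.End K V,
      p ∈ Submodule.span K S → p.1 = 0 → p.2 = 0 := by
    intro p hp h0
    obtain ⟨hder, z, hz⟩ := key p hp
    rw [h0, zero_add] at hder
    rw [h0, zero_sub] at hz
    have hz2 : (m (-z) : Module.End K V) = p.2 := by
      rw [map_neg, ← hz, neg_neg]
    have : IsDeriv m (m (-z)) := hz2 ▸ hder
    have h0' := hL (-z) this
    rw [← hz2, h0']
  refine ⟨?_, part2⟩
  -- first part: BijOn
  have himg : (LinearMap.fst K (Module.End K V) (Module.End K V)) '' S = T := by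
    ext A
    constructor
    · rintro ⟨q, ⟨x, y, rfl⟩, rfl⟩; exact ⟨x, y, rfl⟩
    · rintro ⟨x, y, rfl⟩
      exact ⟨(Dop m x y, - Dop m y x), ⟨x, y, rfl⟩, rfl⟩
  have hmap : Submodule.map (LinearMap.fst K (Module.End K V) (Module.End K V))
      (Submodule.span K S) = Submodule.span K T := by
    rw [Submodule.map_span, himg]
  refine ⟨?_, ?_, ?_⟩
  · intro p hp
    have : (LinearMap.fst K (Module.End K V) (Module.End K V)) p
        ∈ Submodule.map (LinearMap.fst K (Module.End K V) (Module.End K V))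
          (Submodule.span K S) := Submodule.mem_map_of_mem hp
    rw [hmap] at this
    exact this
  · intro p hp q hq h
    have hsub : p - q ∈ Submodule.span K S := Submodule.sub_mem _ hp hq
    have h1 : (p - q).1 = 0 := by
      simp only [Prod.fst_sub]
      rw [h]; simp
    have h2 := part2 (p - q) hsub h1
    simp only [Prod.snd_sub, sub_eq_zero] at h2
    have h1' : p.1 = q.1 := h
    exact Prod.ext h1' h2
  · intro A hA
    have hA' : A ∈ Submodule.span K T := hA
    rw [← hmap] at hA'
    obtain ⟨q, hq, rfl⟩ := hA'
    exact ⟨q, hq, rfl⟩
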